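/- For the state ρ = (1/4)(𝟙⊗𝟙 + 0.4 σ₁⊗𝟙 + 0.4(𝟙⊗σ₁ − 𝟙⊗σ₃) + 0.2 σ₃⊗σ₃) and the POVMs M^A_{0|0} = M^B_{0|0} = |0⟩⟨0|, M^A_{0|1} = M^B_{0|1} = |+⟩⟨+| (with complements for outcome 1), the determinant witness Q = det [ [p(0|0;0,0)−p(0|1;0,0), p(0|0;1,0)−p(0|1;1,0)], [p(0|0;0,1)−p(0|1;0,1), p(0|0;1,1)−p(0|1;1,1)] ] is nonzero, where p(b|a;x,y) = p(a,b|x,y)/p(a|x) are Bob's conditional probabilities. -/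
import Mathlib


open Matrix Kronecker
open scoped BigOperators

/-- The state ρ = (1/4)(𝟙⊗𝟙 + 0.4 σ₁⊗𝟙 + 0.4(𝟙⊗σ₁ − 𝟙⊗σ₃) + 0.2 σ₃⊗σ₃),
written out explicitly in the computational basis. -/
noncomputable def giorgiState : Matrix (Fin 2 × Fin 2) (Fin 2 × Fin 2) ℂ :=
  ((1 : ℂ) / 4) • ((1 : Matrix (Fin 2 × Fin 2) (Fin 2 × Fin 2) ℂ)
    + ((2 : ℂ) / 5) • ((!![0, 1; 1, 0] : Matrix (Fin 2) (Fin 2) ℂ) ⊗ₖ (1 : Matrix (Fin 2) (Fin 2) ℂ))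
    + ((2 : ℂ) / 5) • (((1 : Matrix (Fin 2) (Fin 2) ℂ) ⊗ₖ (!![0, 1; 1, 0] : Matrix (Fin 2) (Fin 2) ℂ))
        - ((1 : Matrix (Fin 2) (Fin 2) ℂ) ⊗ₖ (!![1, 0; 0, -1] : Matrix (Fin 2) (Fin 2) ℂ)))
    + ((1 : ℂ) / 5) • ((!![1, 0; 0, -1] : Matrix (Fin 2) (Fin 2) ℂ) ⊗ₖ (!![1, 0; 0, -1] : Matrix (Fin 2) (Fin 2) ℂ)))

/-- The POVM with elements |0⟩⟨0|, |1⟩⟨1| (setting 0) and |+⟩⟨+|, |−⟩⟨−| (setting 1),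
indexed as M x a for setting x and outcome a. -/
noncomputable def povmZX : Fin 2 → Fin 2 → Matrix (Fin 2) (Fin 2) ℂ :=
  ![![!![1, 0; 0, 0], !![0, 0; 0, 1]],
    ![!![1/2, 1/2; 1/2, 1/2], !![1/2, -(1/2); -(1/2), 1/2]]]

/-- Joint probabilities p(a,b|x,y) for Alice and Bob measuring povmZX on giorgiState. -/
noncomputable def jointP (a b x y : Fin 2) : ℝ :=
  (((povmZX x a ⊗ₖ povmZX y b) * giorgiState).trace).re

/-- Alice's marginal p(a|x). -/
noncomputable def margA (a x : Fin 2) : ℝ :=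
  (((povmZX x a ⊗ₖ (1 : Matrix (Fin 2) (Fin 2) ℂ)) * giorgiState).trace).re

/-- Bob's conditional probability p(b|a;x,y) = p(a,b|x,y)/p(a|x). -/
noncomputable def condB (b a x y : Fin 2) : ℝ := jointP a b x y / margA a x

set_option maxHeartbeats 1000000 in
lemma jP_0000 : jointP 0 0 0 0 = 1/5 := by
  simp [jointP, margA, giorgiState, povmZX, Matrix.trace, Matrix.diag, Matrix.mul_apply,
    Fintype.sum_prod_type, Fin.sum_univ_succ, Matrix.one_apply, Matrix.kroneckerMap_apply,
    ← Prod.mk_zero_zero, ← Prod.mk_one_one, Prod.mk.injEq]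
  norm_num

set_option maxHeartbeats 1000000 in
lemma jP_1000 : jointP 1 0 0 0 = 1/10 := by
  simp [jointP, margA, giorgiState, povmZX, Matrix.trace, Matrix.diag, Matrix.mul_apply,
    Fintype.sum_prod_type, Fin.sum_univ_succ, Matrix.one_apply, Matrix.kroneckerMap_apply,
    ← Prod.mk_zero_zero, ← Prod.mk_one_one, Prod.mk.injEq]
  norm_num

set_option maxHeartbeats 1000000 in
lemma jP_0011 : jointP 0 0 1 1 = 9/20 := by
  simp [jointP, margA, giorgiState, povmZX, Matrix.trace, Matrix.diag, Matrix.mul_apply,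
    Fintype.sum_prod_type, Fin.sum_univ_succ, Matrix.one_apply, Matrix.kroneckerMap_apply,
    ← Prod.mk_zero_zero, ← Prod.mk_one_one, Prod.mk.injEq]
  norm_num

set_option maxHeartbeats 1000000 in
lemma jP_1011 : jointP 1 0 1 1 = 1/4 := by
  simp [jointP, margA, giorgiState, povmZX, Matrix.trace, Matrix.diag, Matrix.mul_apply,
    Fintype.sum_prod_type, Fin.sum_univ_succ, Matrix.one_apply, Matrix.kroneckerMap_apply,
    ← Prod.mk_zero_zero, ← Prod.mk_one_one, Prod.mk.injEq]
  norm_num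

set_option maxHeartbeats 1000000 in
lemma jP_0010 : jointP 0 0 1 0 = 1/4 := by
  simp [jointP, margA, giorgiState, povmZX, Matrix.trace, Matrix.diag, Matrix.mul_apply,
    Fintype.sum_prod_type, Fin.sum_univ_succ, Matrix.one_apply, Matrix.kroneckerMap_apply,
    ← Prod.mk_zero_zero, ← Prod.mk_one_one, Prod.mk.injEq]
  norm_num

set_option maxHeartbeats 1000000 in
lemma jP_1010 : jointP 1 0 1 0 = 1/20 := by
  simp [jointP, margA, giorgiState, povmZX, Matrix.trace, Matrix.diag, Matrix.mul_apply,
    Fintype.sum_prod_type, Fin.sum_univ_succ, Matrix.one_apply, Matrix.kroneckerMap_apply,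
    ← Prod.mk_zero_zero, ← Prod.mk_one_one, Prod.mk.injEq]
  norm_num

set_option maxHeartbeats 1000000 in
lemma jP_0001 : jointP 0 0 0 1 = 7/20 := by
  simp [jointP, margA, giorgiState, povmZX, Matrix.trace, Matrix.diag, Matrix.mul_apply,
    Fintype.sum_prod_type, Fin.sum_univ_succ, Matrix.one_apply, Matrix.kroneckerMap_apply,
    ← Prod.mk_zero_zero, ← Prod.mk_one_one, Prod.mk.injEq]
  norm_num

set_option maxHeartbeats 1000000 in
lemma jP_1001 : jointP 1 0 0 1 = 7/20 := by
  simp [jointP, margA, giorgiState, povmZX, Matrix.trace, Matrix.diag, Matrix.mul_apply,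
    Fintype.sum_prod_type, Fin.sum_univ_succ, Matrix.one_apply, Matrix.kroneckerMap_apply,
    ← Prod.mk_zero_zero, ← Prod.mk_one_one, Prod.mk.injEq]
  norm_num

set_option maxHeartbeats 1000000 in
lemma mA_00 : margA 0 0 = 1/2 := by
  simp [jointP, margA, giorgiState, povmZX, Matrix.trace, Matrix.diag, Matrix.mul_apply,
    Fintype.sum_prod_type, Fin.sum_univ_succ, Matrix.one_apply, Matrix.kroneckerMap_apply,
    ← Prod.mk_zero_zero, ← Prod.mk_one_one, Prod.mk.injEq]
  norm_num

set_option maxHeartbeats 1000000 in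
lemma mA_10 : margA 1 0 = 1/2 := by
  simp [jointP, margA, giorgiState, povmZX, Matrix.trace, Matrix.diag, Matrix.mul_apply,
    Fintype.sum_prod_type, Fin.sum_univ_succ, Matrix.one_apply, Matrix.kroneckerMap_apply,
    ← Prod.mk_zero_zero, ← Prod.mk_one_one, Prod.mk.injEq]
  norm_num

set_option maxHeartbeats 1000000 in
lemma mA_01 : margA 0 1 = 7/10 := by
  simp [jointP, margA, giorgiState, povmZX, Matrix.trace, Matrix.diag, Matrix.mul_apply,
    Fintype.sum_prod_type, Fin.sum_univ_succ, Matrix.one_apply, Matrix.kroneckerMap_apply,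
    ← Prod.mk_zero_zero, ← Prod.mk_one_one, Prod.mk.injEq]
  norm_num

set_option maxHeartbeats 1000000 in
lemma mA_11 : margA 1 1 = 3/10 := by
  simp [jointP, margA, giorgiState, povmZX, Matrix.trace, Matrix.diag, Matrix.mul_apply,
    Fintype.sum_prod_type, Fin.sum_univ_succ, Matrix.one_apply, Matrix.kroneckerMap_apply,
    ← Prod.mk_zero_zero, ← Prod.mk_one_one, Prod.mk.injEq]
  norm_num

/-- the determinant witness Q built from Bob's conditional probabilities
is nonzero for giorgiState with these measurements. -/
theorem giorgiState_Q_ne_zero :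
    (condB 0 0 0 0 - condB 0 1 0 0) * (condB 0 0 1 1 - condB 0 1 1 1)
      - (condB 0 0 1 0 - condB 0 1 1 0) * (condB 0 0 0 1 - condB 0 1 0 1) ≠ 0 := by
  simp only [condB, jP_0000, jP_1000, jP_0011, jP_1011, jP_0010, jP_1010, jP_0001, jP_1001,
    mA_00, mA_10, mA_01, mA_11]
  norm_num
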